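/- Let η, σ, κ_m > 0 and set d = η + κ_m. Define f(u,w,ε) = ε·(w − u)/d, g(u,w,ε) = σ·u·(u − w) + ε·(w − u)/d − η·σ·(u − w)²/d, and h(u,ε) = (σ·κ_m/d²)·u² − (1/d²)·u·ε. Then the invariance residual N(u,ε) := (∂h/∂u)(u,ε)·f(u, h(u,ε), ε) + d·h(u,ε) − g(u, h(u,ε), ε) satisfies: there exists a constant M > 0 such that |N(u,ε)| ≤ M·(|u| + |ε|)³ for all (u,ε) with |u| + |ε| ≤ 1. -/

import Mathlib

private lemma abs_add7 (a b c d e f g : ℝ) :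
    |a + b + c + d + e + f + g| ≤ |a| + |b| + |c| + |d| + |e| + |f| + |g| :=
  (abs_add_le _ g).trans (add_le_add_left ((abs_add_le _ f).trans (add_le_add_left
    ((abs_add_le _ e).trans (add_le_add_left ((abs_add_le _ d).trans (add_le_add_left
      ((abs_add_le _ c).trans (add_le_add_left (abs_add_le a b) _)) _)) _)) _)) _)

set_option maxHeartbeats 1000000 in
/-- For the dimensionless tQSSA Michaelis–Menten system, the second-order polynomial
`h(u,ε) = (σ κₘ/d²) u² − (1/d²) u ε` (with `d = η + κₘ`) annihilates the
center-manifold invariance residual up to third-order terms. -/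
theorem stmt_9 (η σ κm : ℝ) (hη : 0 < η) (hσ : 0 < σ) (hκm : 0 < κm)
    (d : ℝ) (hd : d = η + κm)
    (f g : ℝ → ℝ → ℝ → ℝ)
    (hf : ∀ u w ε, f u w ε = ε * (w - u) / d)
    (hg : ∀ u w ε, g u w ε =
      σ * u * (u - w) + ε * (w - u) / d - η * σ * (u - w) ^ 2 / d)
    (h : ℝ → ℝ → ℝ)
    (hh : ∀ u ε, h u ε = σ * κm / d ^ 2 * u ^ 2 - 1 / d ^ 2 * u * ε)
    (N : ℝ → ℝ → ℝ)
    (hN : ∀ u ε, N u ε =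
      deriv (fun x => h x ε) u * f u (h u ε) ε + d * h u ε - g u (h u ε) ε) :
    ∃ M > 0, ∀ u ε : ℝ, |u| + |ε| ≤ 1 → |N u ε| ≤ M * (|u| + |ε|) ^ 3 := by
  have hd0 : (0:ℝ) < d := by rw [hd]; linarith
  have hdne : d ≠ 0 := ne_of_gt hd0
  -- the seven coefficients of the residual polynomial
  set C30 : ℝ := σ ^ 2 * κm * (κm - η) / d ^ 3 with hC30
  set C21 : ℝ := σ * (η - 4 * κm) / d ^ 3 with hC21
  set C12 : ℝ := 2 / d ^ 3 with hC12
  set C40 : ℝ := η * σ ^ 3 * κm ^ 2 / d ^ 5 with hC40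
  set C31 : ℝ := 2 * σ ^ 2 * κm * (κm - η) / d ^ 5 with hC31
  set C22 : ℝ := σ * (η - 3 * κm) / d ^ 5 with hC22
  set C13 : ℝ := 1 / d ^ 5 with hC13
  refine ⟨|C30| + |C21| + |C12| + |C40| + |C31| + |C22| + |C13| + 1, by positivity, ?_⟩
  intro u ε hs1
  -- compute the derivative
  have hderiv : deriv (fun x => h x ε) u = 2 * (σ * κm / d ^ 2) * u - 1 / d ^ 2 * ε := by
    have heq : (fun x => h x ε) = fun x => σ * κm / d ^ 2 * x ^ 2 - 1 / d ^ 2 * x * ε := by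
      funext x; rw [hh]
    rw [heq]
    have h1 : HasDerivAt (fun x : ℝ => σ * κm / d ^ 2 * x ^ 2 - 1 / d ^ 2 * x * ε)
        (σ * κm / d ^ 2 * (2 * u) - 1 / d ^ 2 * 1 * ε) u := by
      exact (((hasDerivAt_pow 2 u).const_mul (σ * κm / d ^ 2)).sub
        (((hasDerivAt_id u).const_mul (1 / d ^ 2)).mul_const ε)).congr_deriv (by ring_nf)
    rw [h1.deriv]; ring
  -- the explicit polynomial form of the residual
  have hNval : N u ε = C30 * u ^ 3 + C21 * (u ^ 2 * ε) + C12 * (u * ε ^ 2)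
      + C40 * u ^ 4 + C31 * (u ^ 3 * ε) + C22 * (u ^ 2 * ε ^ 2) + C13 * (u * ε ^ 3) := by
    rw [hN, hderiv, hf, hg, hh, hC30, hC21, hC12, hC40, hC31, hC22, hC13, hd]
    have hdne' : η + κm ≠ 0 := by rw [← hd]; exact hdne
    field_simp
    ring
  set s : ℝ := |u| + |ε| with hs
  have hu : |u| ≤ s := le_add_of_nonneg_right (abs_nonneg _)
  have he : |ε| ≤ s := le_add_of_nonneg_left (abs_nonneg _)
  have hs0 : (0:ℝ) ≤ s := by positivity
  have hpow : ∀ p q : ℕ, |u| ^ p * |ε| ^ q ≤ s ^ (p + q) := by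
    intro p q
    rw [pow_add]
    exact mul_le_mul (pow_le_pow_left₀ (abs_nonneg _) hu p)
      (pow_le_pow_left₀ (abs_nonneg _) he q) (by positivity) (by positivity)
  have h43 : s ^ 4 ≤ s ^ 3 := pow_le_pow_of_le_one hs0 hs1 (by norm_num)
  have t1 : |u| ^ 3 ≤ s ^ 3 := by simpa using hpow 3 0
  have t2 : |u| ^ 2 * |ε| ≤ s ^ 3 := by simpa using hpow 2 1
  have t3 : |u| * |ε| ^ 2 ≤ s ^ 3 := by simpa using hpow 1 2
  have t4 : |u| ^ 4 ≤ s ^ 3 := le_trans (by simpa using hpow 4 0) h43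
  have t5 : |u| ^ 3 * |ε| ≤ s ^ 3 := le_trans (by simpa using hpow 3 1) h43
  have t6 : |u| ^ 2 * |ε| ^ 2 ≤ s ^ 3 := le_trans (by simpa using hpow 2 2) h43
  have t7 : |u| * |ε| ^ 3 ≤ s ^ 3 := le_trans (by simpa using hpow 1 3) h43
  have step : ∀ c t : ℝ, t ≤ s ^ 3 → |c| * t ≤ |c| * s ^ 3 :=
    fun c t ht => mul_le_mul_of_nonneg_left ht (abs_nonneg c)
  calc |N u ε| ≤ |C30 * u ^ 3| + |C21 * (u ^ 2 * ε)| + |C12 * (u * ε ^ 2)|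
        + |C40 * u ^ 4| + |C31 * (u ^ 3 * ε)| + |C22 * (u ^ 2 * ε ^ 2)|
        + |C13 * (u * ε ^ 3)| := by rw [hNval]; exact abs_add7 _ _ _ _ _ _ _
    _ = |C30| * |u| ^ 3 + |C21| * (|u| ^ 2 * |ε|) + |C12| * (|u| * |ε| ^ 2)
        + |C40| * |u| ^ 4 + |C31| * (|u| ^ 3 * |ε|) + |C22| * (|u| ^ 2 * |ε| ^ 2)
        + |C13| * (|u| * |ε| ^ 3) := by simp [abs_mul, abs_pow]
    _ ≤ |C30| * s ^ 3 + |C21| * s ^ 3 + |C12| * s ^ 3 + |C40| * s ^ 3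
        + |C31| * s ^ 3 + |C22| * s ^ 3 + |C13| * s ^ 3 :=
      add_le_add (add_le_add (add_le_add (add_le_add (add_le_add (add_le_add
        (step _ _ t1) (step _ _ t2)) (step _ _ t3)) (step _ _ t4))
        (step _ _ t5)) (step _ _ t6)) (step _ _ t7)
    _ ≤ (|C30| + |C21| + |C12| + |C40| + |C31| + |C22| + |C13| + 1) * s ^ 3 := by
      nlinarith [pow_nonneg hs0 3]
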